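/- Let f, g : ℂ × ℂ → ℂ be smooth functions whose supports are compact and contained in ℂ × (ℂ∖{0}). Then ∫ (Y f)(z,y)·g(z,y)·|y|⁻⁴ dλ(z,y) = ∫ f(z,y)·(g(z,y) − (Y g)(z,y))·|y|⁻⁴ dλ(z,y), where λ is Lebesgue measure on ℂ × ℂ ≅ ℝ⁴. (This integration-by-parts identity against the invariant volume |y|⁻⁴dλ realizes the value δ(Y) = 1 of the modular character δ of the Hopf algebra, entering the twisted antipode S̃.) -/

import Mathlib

open MeasureTheory

/-- First-variable Wirtinger derivative ∂₁F(p) = ½(DF(p)(e₁) − i·DF(p)(i·e₁)) for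
F : ℂ × ℂ → ℂ, where DF(p) is the real Fréchet derivative of F at p. -/
noncomputable def wirt1 (F : ℂ × ℂ → ℂ) (p : ℂ × ℂ) : ℂ :=
  (1 / 2 : ℂ) * (fderiv ℝ F p (1, 0) - Complex.I * fderiv ℝ F p (Complex.I, 0))

/-- Second-variable Wirtinger derivative ∂₂F(p) = ½(DF(p)(e₂) − i·DF(p)(i·e₂)). -/
noncomputable def wirt2 (F : ℂ × ℂ → ℂ) (p : ℂ × ℂ) : ℂ :=
  (1 / 2 : ℂ) * (fderiv ℝ F p (0, 1) - Complex.I * fderiv ℝ F p (0, Complex.I))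

/-- The operator (X F)(z,y) = y·∂₁F(z,y). -/
noncomputable def Xop (F : ℂ × ℂ → ℂ) : ℂ × ℂ → ℂ := fun p => p.2 * wirt1 F p

/-- The operator (Y F)(z,y) = y·∂₂F(z,y). -/
noncomputable def Yop (F : ℂ × ℂ → ℂ) : ℂ × ℂ → ℂ := fun p => p.2 * wirt2 F p

/-! ### Auxiliary lemmas -/

instance : (volume : Measure (ℂ × ℂ)).IsAddHaarMeasure := by
  have : (volume : Measure (ℂ × ℂ)) = (volume : Measure ℂ).prod volume := rfl
  rw [this]; infer_instance

lemma cont_fderiv_apply (H : ℂ × ℂ → ℂ) (hH : ContDiff ℝ (⊤ : ℕ∞) H) (v : ℂ × ℂ) :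
    Continuous (fun p : ℂ × ℂ => fderiv ℝ H p v) :=
  (hH.continuous_fderiv (by simp)).clm_apply continuous_const

lemma hcs_fderiv_apply (H : ℂ × ℂ → ℂ) (hHc : HasCompactSupport H) (v : ℂ × ℂ) :
    HasCompactSupport (fun p : ℂ × ℂ => fderiv ℝ H p v) :=
  (hHc.fderiv ℝ).comp_left (g := fun L : (ℂ × ℂ) →L[ℝ] ℂ => L v) (by simp)

lemma int_fderiv_zero (H : ℂ × ℂ → ℂ) (hH : ContDiff ℝ (⊤ : ℕ∞) H)
    (hHc : HasCompactSupport H) (v : ℂ × ℂ) :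
    ∫ p : ℂ × ℂ, fderiv ℝ H p v = 0 := by
  have h1 : Integrable (fun p : ℂ × ℂ => fderiv ℝ (fun _ : ℂ × ℂ => (1:ℂ)) p v * H p) := by
    simp [fderiv_const]
  have h2 : Integrable (fun p : ℂ × ℂ => (1:ℂ) * fderiv ℝ H p v) := by
    simpa using (cont_fderiv_apply H hH v).integrable_of_hasCompactSupport
      (hcs_fderiv_apply H hHc v)
  have h3 : Integrable (fun p : ℂ × ℂ => (1:ℂ) * H p) := by
    simpa using (hH.continuous).integrable_of_hasCompactSupport hHc
  have := integral_mul_fderiv_eq_neg_fderiv_mul_of_integrable h1 h2 h3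
    (fun x _ => differentiableAt_const (1:ℂ)) (fun x _ => hH.differentiable (by simp) x) (v := v)
  simp only [fderiv_fun_const, Pi.zero_apply, ContinuousLinearMap.zero_apply, zero_mul, one_mul,
    integral_zero, neg_zero] at this
  exact this

lemma int_wirt2_zero (H : ℂ × ℂ → ℂ) (hH : ContDiff ℝ (⊤ : ℕ∞) H)
    (hHc : HasCompactSupport H) :
    ∫ p : ℂ × ℂ, wirt2 H p = 0 := by
  have h1 := int_fderiv_zero H hH hHc (0, 1)
  have h2 := int_fderiv_zero H hH hHc (0, Complex.I)
  have i1 : Integrable (fun p : ℂ × ℂ => fderiv ℝ H p (0,1)) :=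
    (cont_fderiv_apply H hH _).integrable_of_hasCompactSupport (hcs_fderiv_apply H hHc _)
  have i2 : Integrable (fun p : ℂ × ℂ => fderiv ℝ H p (0,Complex.I)) :=
    (cont_fderiv_apply H hH _).integrable_of_hasCompactSupport (hcs_fderiv_apply H hHc _)
  unfold wirt2
  rw [integral_const_mul, integral_sub i1 (i2.const_mul _), h1, integral_const_mul, h2]
  simp

lemma wirt2_mul {A B : ℂ × ℂ → ℂ} {p : ℂ × ℂ} (hA : DifferentiableAt ℝ A p)
    (hB : DifferentiableAt ℝ B p) :
    wirt2 (fun q => A q * B q) p = wirt2 A p * B p + A p * wirt2 B p := by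
  unfold wirt2
  rw [fderiv_fun_mul hA hB]
  simp only [ContinuousLinearMap.add_apply, ContinuousLinearMap.smul_apply, smul_eq_mul]
  ring

lemma wirt2_snd (p : ℂ × ℂ) : wirt2 (fun q : ℂ × ℂ => q.2) p = 1 := by
  unfold wirt2
  have : fderiv ℝ (fun q : ℂ × ℂ => q.2) p = ContinuousLinearMap.snd ℝ ℂ ℂ :=
    (ContinuousLinearMap.snd ℝ ℂ ℂ).fderiv
  rw [this]
  simp [Complex.I_mul_I]
  ring

lemma wirt2_conj_snd (p : ℂ × ℂ) :
    wirt2 (fun q : ℂ × ℂ => (starRingEnd ℂ) q.2) p = 0 := by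
  unfold wirt2
  have : fderiv ℝ (fun q : ℂ × ℂ => (starRingEnd ℂ) q.2) p =
      (Complex.conjCLE.toContinuousLinearMap.comp (ContinuousLinearMap.snd ℝ ℂ ℂ)) :=
    (Complex.conjCLE.toContinuousLinearMap.comp (ContinuousLinearMap.snd ℝ ℂ ℂ)).fderiv
  rw [this]
  simp [Complex.conjCLE_apply, Complex.conj_I]

lemma wirt2_inv {u : ℂ × ℂ → ℂ} {p : ℂ × ℂ} (hu : DifferentiableAt ℝ u p) (h0 : u p ≠ 0) :
    wirt2 (fun q => (u q)⁻¹) p = -((u p) ^ 2)⁻¹ * wirt2 u p := by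
  have hinv : HasFDerivAt (fun z : ℂ => z⁻¹)
      (((1 : ℂ →L[ℂ] ℂ).smulRight (-((u p) ^ 2)⁻¹)).restrictScalars ℝ) (u p) :=
    ((hasDerivAt_inv h0).hasFDerivAt).restrictScalars ℝ
  have hcomp : HasFDerivAt (fun q => (u q)⁻¹)
      ((((1 : ℂ →L[ℂ] ℂ).smulRight (-((u p) ^ 2)⁻¹)).restrictScalars ℝ).comp (fderiv ℝ u p)) p :=
    hinv.comp p hu.hasFDerivAt
  unfold wirt2
  rw [hcomp.fderiv]
  simp only [ContinuousLinearMap.coe_comp', Function.comp_apply,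
    ContinuousLinearMap.coe_restrictScalars', ContinuousLinearMap.smulRight_apply,
    ContinuousLinearMap.one_apply, smul_eq_mul]
  ring

lemma wirt2_eventually_zero {F : ℂ × ℂ → ℂ} {p : ℂ × ℂ}
    (h : F =ᶠ[nhds p] fun _ => (0 : ℂ)) : wirt2 F p = 0 := by
  unfold wirt2
  rw [h.fderiv_eq]
  simp [fderiv_const]

/-! ### The auxiliary weight function φ(z,y) = conj(y)⁻¹ · conj(y)⁻¹ · y⁻¹ -/

noncomputable def phi (q : ℂ × ℂ) : ℂ :=
  ((starRingEnd ℂ) q.2)⁻¹ * (((starRingEnd ℂ) q.2)⁻¹ * (q.2)⁻¹)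

lemma diff_conj_snd (p : ℂ × ℂ) :
    DifferentiableAt ℝ (fun q : ℂ × ℂ => (starRingEnd ℂ) q.2) p :=
  (Complex.conjCLE.toContinuousLinearMap.comp (ContinuousLinearMap.snd ℝ ℂ ℂ)).differentiableAt

lemma diff_inv_conj_snd {p : ℂ × ℂ} (hy : p.2 ≠ 0) :
    DifferentiableAt ℝ (fun q : ℂ × ℂ => ((starRingEnd ℂ) q.2)⁻¹) p := by
  have h0 : (starRingEnd ℂ) p.2 ≠ 0 := by simpa using hy
  exact ((differentiableAt_inv h0 : DifferentiableAt ℂ _ _).restrictScalars ℝ).comp p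
    (diff_conj_snd p)

lemma diff_inv_snd {p : ℂ × ℂ} (hy : p.2 ≠ 0) :
    DifferentiableAt ℝ (fun q : ℂ × ℂ => (q.2)⁻¹) p :=
  ((differentiableAt_inv hy : DifferentiableAt ℂ _ _).restrictScalars ℝ).comp p
    (ContinuousLinearMap.snd ℝ ℂ ℂ).differentiableAt

lemma diff_phi {p : ℂ × ℂ} (hy : p.2 ≠ 0) : DifferentiableAt ℝ phi p :=
  (diff_inv_conj_snd hy).mul ((diff_inv_conj_snd hy).mul (diff_inv_snd hy))

lemma contDiffAt_phi {p : ℂ × ℂ} (hy : p.2 ≠ 0) : ContDiffAt ℝ (⊤ : ℕ∞) phi p := by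
  have h0 : (starRingEnd ℂ) p.2 ≠ 0 := by simpa using hy
  have hconj : ContDiffAt ℝ (⊤ : ℕ∞) (fun q : ℂ × ℂ => (starRingEnd ℂ) q.2) p :=
    (Complex.conjCLE.toContinuousLinearMap.comp
      (ContinuousLinearMap.snd ℝ ℂ ℂ)).contDiff.contDiffAt
  have hic : ContDiffAt ℝ (⊤ : ℕ∞) (fun q : ℂ × ℂ => ((starRingEnd ℂ) q.2)⁻¹) p :=
    ((contDiffAt_inv ℂ h0).restrict_scalars ℝ).comp p hconj
  have his : ContDiffAt ℝ (⊤ : ℕ∞) (fun q : ℂ × ℂ => (q.2)⁻¹) p :=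
    ((contDiffAt_inv ℂ hy).restrict_scalars ℝ).comp p
      (ContinuousLinearMap.snd ℝ ℂ ℂ).contDiff.contDiffAt
  exact hic.mul (hic.mul his)

lemma wirt2_phi {p : ℂ × ℂ} (hy : p.2 ≠ 0) :
    wirt2 phi p = ((starRingEnd ℂ) p.2)⁻¹ * (((starRingEnd ℂ) p.2)⁻¹ * (-((p.2) ^ 2)⁻¹)) := by
  have h0 : (starRingEnd ℂ) p.2 ≠ 0 := by simpa using hy
  have hc : wirt2 (fun q : ℂ × ℂ => ((starRingEnd ℂ) q.2)⁻¹) p = 0 := by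
    rw [wirt2_inv (diff_conj_snd p) h0, wirt2_conj_snd]; ring
  have hs : wirt2 (fun q : ℂ × ℂ => (q.2)⁻¹) p = -((p.2) ^ 2)⁻¹ := by
    rw [wirt2_inv (u := fun q : ℂ × ℂ => q.2)
      (ContinuousLinearMap.snd ℝ ℂ ℂ).differentiableAt hy, wirt2_snd]; ring
  have h1 : wirt2 (fun q : ℂ × ℂ => ((starRingEnd ℂ) q.2)⁻¹ * (q.2)⁻¹) p
      = ((starRingEnd ℂ) p.2)⁻¹ * (-((p.2) ^ 2)⁻¹) := by
    rw [wirt2_mul (diff_inv_conj_snd hy) (diff_inv_snd hy), hc, hs]; ring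
  have h2 := wirt2_mul (A := fun q : ℂ × ℂ => ((starRingEnd ℂ) q.2)⁻¹)
    (B := fun q : ℂ × ℂ => ((starRingEnd ℂ) q.2)⁻¹ * (q.2)⁻¹)
    (diff_inv_conj_snd hy) ((diff_inv_conj_snd hy).mul (diff_inv_snd hy))
  rw [hc, h1] at h2
  have : phi = fun q : ℂ × ℂ =>
      ((starRingEnd ℂ) q.2)⁻¹ * (((starRingEnd ℂ) q.2)⁻¹ * (q.2)⁻¹) := rfl
  rw [this, h2]; ring

/-- The invariant weight in terms of inverses. -/
lemma weight_eq (y : ℂ) :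
    (((‖y‖ ^ 4)⁻¹ : ℝ) : ℂ)
      = ((starRingEnd ℂ) y)⁻¹ * (((starRingEnd ℂ) y)⁻¹ * (y⁻¹ * y⁻¹)) := by
  by_cases hy : y = 0
  · simp [hy]
  · have h2 : ((‖y‖ ^ 2 : ℝ) : ℂ) = y * (starRingEnd ℂ) y := by
      rw [Complex.sq_norm]
      exact (Complex.mul_conj y).symm
    have h4 : ((‖y‖ ^ 4 : ℝ) : ℂ) = (y * (starRingEnd ℂ) y) ^ 2 := by
      rw [show (‖y‖ ^ 4 : ℝ) = (‖y‖ ^ 2) ^ 2 by ring]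
      push_cast [← h2]
      ring
    rw [Complex.ofReal_inv, h4]
    have hcy : (starRingEnd ℂ) y ≠ 0 := by simpa using hy
    field_simp

/-- Integration by parts against the invariant volume |y|⁻⁴dλ, realizing δ(Y) = 1:
for smooth compactly supported f, g with supports in ℂ × (ℂ∖{0}),
∫ (Y f)·g·|y|⁻⁴ = ∫ f·(g − Y g)·|y|⁻⁴. -/
theorem stmt10 (f g : ℂ × ℂ → ℂ)
    (hf : ContDiff ℝ (⊤ : ℕ∞) f) (hg : ContDiff ℝ (⊤ : ℕ∞) g)
    (hfc : HasCompactSupport f) (hgc : HasCompactSupport g)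
    (hfs : tsupport f ⊆ (Set.univ : Set ℂ) ×ˢ {y : ℂ | y ≠ 0})
    (hgs : tsupport g ⊆ (Set.univ : Set ℂ) ×ˢ {y : ℂ | y ≠ 0}) :
    ∫ p : ℂ × ℂ, Yop f p * g p * (((‖p.2‖ ^ 4)⁻¹ : ℝ) : ℂ)
      = ∫ p : ℂ × ℂ, f p * (g p - Yop g p) * (((‖p.2‖ ^ 4)⁻¹ : ℝ) : ℂ) := by
  classical
  set W : ℂ × ℂ → ℂ := fun p => (((‖p.2‖ ^ 4)⁻¹ : ℝ) : ℂ) with hW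
  -- if p.2 = 0 then f (resp. g) vanishes near p
  have hnf : ∀ {p : ℂ × ℂ}, p.2 = 0 → f =ᶠ[nhds p] fun _ => (0:ℂ) := by
    intro p hp
    have hnot : p ∉ tsupport f := fun h => by simpa [hp] using (hfs h).2
    filter_upwards [(isClosed_tsupport f).isOpen_compl.mem_nhds hnot] with q hq
    exact image_eq_zero_of_notMem_tsupport hq
  have hng : ∀ {p : ℂ × ℂ}, p.2 = 0 → g =ᶠ[nhds p] fun _ => (0:ℂ) := by
    intro p hp
    have hnot : p ∉ tsupport g := fun h => by simpa [hp] using (hgs h).2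
    filter_upwards [(isClosed_tsupport g).isOpen_compl.mem_nhds hnot] with q hq
    exact image_eq_zero_of_notMem_tsupport hq
  -- the auxiliary function H = f · g · φ
  set H : ℂ × ℂ → ℂ := fun q => f q * g q * phi q with hHdef
  have hH : ContDiff ℝ (⊤ : ℕ∞) H := by
    rw [contDiff_iff_contDiffAt]
    intro p
    by_cases hy : p.2 = 0
    · have hev : H =ᶠ[nhds p] fun _ => (0:ℂ) := by
        filter_upwards [hnf hy] with q hq
        simp [hHdef, hq]
      exact (contDiffAt_const (c := (0:ℂ))).congr_of_eventuallyEq hev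
    · exact (hf.contDiffAt.mul hg.contDiffAt).mul (contDiffAt_phi hy)
  have hHc : HasCompactSupport H := by
    apply hfc.mono'
    intro q hq
    apply subset_closure
    intro h0
    apply hq
    simp [hHdef, h0]
  -- continuity of wirt2 f and wirt2 g
  have contw2 : ∀ (F : ℂ × ℂ → ℂ), ContDiff ℝ (⊤ : ℕ∞) F → Continuous (wirt2 F) := by
    intro F hF
    unfold wirt2
    exact continuous_const.mul ((cont_fderiv_apply F hF _).sub
      (continuous_const.mul (cont_fderiv_apply F hF _)))
  -- continuity of each integrand
  have contW : ∀ {p : ℂ × ℂ}, p.2 ≠ 0 → ContinuousAt W p := by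
    intro p hy
    have habs : (‖p.2‖ ^ 4 : ℝ) ≠ 0 := by
      simpa using pow_ne_zero 4 ((norm_ne_zero_iff).2 hy)
    exact Complex.continuous_ofReal.continuousAt.comp
      ((((continuous_norm.comp continuous_snd).pow 4).continuousAt).inv₀ habs)
  have contYfgW : Continuous (fun p : ℂ × ℂ => Yop f p * g p * W p) := by
    rw [continuous_iff_continuousAt]
    intro p
    by_cases hy : p.2 = 0
    · have hev : (fun p : ℂ × ℂ => Yop f p * g p * W p) =ᶠ[nhds p] fun _ => (0:ℂ) := by
        filter_upwards [hng hy] with q hq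
        simp [hq]
      exact hev.continuousAt
    · exact (((continuous_snd.mul (contw2 f hf)).continuousAt.mul hg.continuous.continuousAt).mul
        (contW hy))
  have contfYgW : Continuous (fun p : ℂ × ℂ => f p * Yop g p * W p) := by
    rw [continuous_iff_continuousAt]
    intro p
    by_cases hy : p.2 = 0
    · have hev : (fun p : ℂ × ℂ => f p * Yop g p * W p) =ᶠ[nhds p] fun _ => (0:ℂ) := by
        filter_upwards [hnf hy] with q hq
        simp [hq]
      exact hev.continuousAt
    · exact ((hf.continuous.continuousAt.mul
        (continuous_snd.mul (contw2 g hg)).continuousAt).mul (contW hy))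
  have contfgW : Continuous (fun p : ℂ × ℂ => f p * g p * W p) := by
    rw [continuous_iff_continuousAt]
    intro p
    by_cases hy : p.2 = 0
    · have hev : (fun p : ℂ × ℂ => f p * g p * W p) =ᶠ[nhds p] fun _ => (0:ℂ) := by
        filter_upwards [hnf hy] with q hq
        simp [hq]
      exact hev.continuousAt
    · exact ((hf.continuous.continuousAt.mul hg.continuous.continuousAt).mul (contW hy))
  -- compact supports and integrability
  have suppg : ∀ (u : ℂ × ℂ → ℂ), (∀ q, g q = 0 → u q = 0) → HasCompactSupport u := by
    intro u hu
    exact hgc.mono' (fun q hq => subset_closure fun h0 => hq (hu q h0))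
  have suppf : ∀ (u : ℂ × ℂ → ℂ), (∀ q, f q = 0 → u q = 0) → HasCompactSupport u := by
    intro u hu
    exact hfc.mono' (fun q hq => subset_closure fun h0 => hq (hu q h0))
  have iA : Integrable (fun p : ℂ × ℂ => Yop f p * g p * W p) :=
    contYfgW.integrable_of_hasCompactSupport
      (suppg _ (fun q hq => by simp [hq]))
  have iB : Integrable (fun p : ℂ × ℂ => f p * Yop g p * W p) :=
    contfYgW.integrable_of_hasCompactSupport
      (suppf _ (fun q hq => by simp [hq]))
  have iC : Integrable (fun p : ℂ × ℂ => f p * g p * W p) :=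
    contfgW.integrable_of_hasCompactSupport
      (suppf _ (fun q hq => by simp [hq]))
  -- the key pointwise identity
  have key : ∀ p : ℂ × ℂ, wirt2 H p
      = Yop f p * g p * W p + (f p * Yop g p * W p - f p * g p * W p) := by
    intro p
    by_cases hy : p.2 = 0
    · have hev : H =ᶠ[nhds p] fun _ => (0:ℂ) := by
        filter_upwards [hnf hy] with q hq
        simp [hHdef, hq]
      have hfp : f p = 0 := (hnf hy).self_of_nhds
      rw [wirt2_eventually_zero hev]
      simp [Yop, hy, hfp]
    · have hdfg : DifferentiableAt ℝ (fun q => f q * g q) p :=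
        (hf.differentiable (by simp) p).mul
          (hg.differentiable (by simp) p)
      have hmul : wirt2 H p = wirt2 (fun q => f q * g q) p * phi p
          + (f p * g p) * wirt2 phi p :=
        wirt2_mul hdfg (diff_phi hy)
      have hfg : wirt2 (fun q => f q * g q) p = wirt2 f p * g p + f p * wirt2 g p :=
        wirt2_mul (hf.differentiable (by simp) p)
          (hg.differentiable (by simp) p)
      have hcy : (starRingEnd ℂ) p.2 ≠ 0 := by simpa using hy
      rw [hmul, hfg, wirt2_phi hy]
      simp only [hW, Yop, weight_eq, phi]
      field_simp [hy, hcy]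
      ring
  -- integrate the key identity
  have hint : ∫ p : ℂ × ℂ, wirt2 H p = 0 := int_wirt2_zero H hH hHc
  have iBC : Integrable (fun p : ℂ × ℂ => f p * Yop g p * W p - f p * g p * W p) := iB.sub iC
  have h0 : (∫ p : ℂ × ℂ, Yop f p * g p * W p)
      + ((∫ p : ℂ × ℂ, f p * Yop g p * W p) - ∫ p : ℂ × ℂ, f p * g p * W p) = 0 := by
    have hint2 : ∫ p : ℂ × ℂ,
        (Yop f p * g p * W p + (f p * Yop g p * W p - f p * g p * W p)) = 0 := by
      rw [← hint]
      exact integral_congr_ae (Filter.Eventually.of_forall fun p => (key p).symm)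
    rw [integral_add iA iBC, integral_sub iB iC] at hint2
    exact hint2
  have hrhs : (fun p : ℂ × ℂ => f p * (g p - Yop g p) * W p)
      = fun p : ℂ × ℂ => f p * g p * W p - f p * Yop g p * W p := by
    funext p; ring
  show (∫ p : ℂ × ℂ, Yop f p * g p * W p) = ∫ p : ℂ × ℂ, f p * (g p - Yop g p) * W p
  rw [hrhs, integral_sub iC iB]
  linear_combination h0
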